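/- arXiv:2310.08416 — 2 statements merged into one kernel-verified Lean document; each statement's English description precedes it below -/
import Mathlib

section
/- Let v_1, …, v_k be linearly independent unit vectors in ℝ^k with Δ = Δ(V) the volume of the parallelepiped they generate. For s ∈ ℝ^k, write ‖s‖_Λ = max_n |⟨s, v_n⟩| and let F(s) = γ_k({r ∈ ℝ^k : |⟨r, v_n⟩| ≤ |⟨s, v_n⟩| for all 1 ≤ n ≤ k}), the Gaussian mass of the interior of the parallelepiped centred at the origin whose faces are normal to the v_n and distance 2|⟨s, v_n⟩| apart. Then for every s ∈ ℝ^k, F(s) ≤ Δ^{−1} ∏_{n=1}^k (2|⟨s, v_n⟩|/√(2π)), and there exists a constant C > 0 (depending only on v_1, …, v_k) such that F(s) ≥ (1 − C‖s‖_Λ²) · Δ^{−1} ∏_{n=1}^k (2|⟨s, v_n⟩|/√(2π)) for all s ∈ ℝ^k. -/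
open MeasureTheory Filter ProbabilityTheory
open scoped RealInnerProductSpace Real ENNReal NNReal

/-- The standard Gaussian measure on `ℝ^m`, i.e. the `m`-fold product of `N(0,1)`,
viewed as a measure on Euclidean space. -/
noncomputable def stdGaussian (m : ℕ) : Measure (EuclideanSpace ℝ (Fin m)) :=
  (Measure.pi fun _ : Fin m => ProbabilityTheory.gaussianReal 0 1).map
    (MeasurableEquiv.toLp 2 (Fin m → ℝ))

/-- `Φ_m t`: the cumulative distribution function of the length of a standard
Gaussian vector in `ℝ^m`. -/
noncomputable def Phi (m : ℕ) (t : ℝ) : ℝ :=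
  (stdGaussian m {x | ‖x‖ ≤ t}).toReal

/-- The Beta function `B(x, y) = Γ(x)Γ(y)/Γ(x+y)`. -/
noncomputable def realBeta (x y : ℝ) : ℝ :=
  Real.Gamma x * Real.Gamma y / Real.Gamma (x + y)


lemma pi_gaussian_eq (k : ℕ) :
    (Measure.pi fun _ : Fin k => gaussianReal 0 1) =
      (volume : Measure (Fin k → ℝ)).withDensity
        (fun x => ENNReal.ofReal (∏ i, gaussianPDFReal 0 1 (x i))) := by
  refine Measure.pi_eq (μ := fun _ : Fin k => gaussianReal 0 1) fun s hs => ?_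
  have hmeas : MeasurableSet (Set.pi Set.univ s) := MeasurableSet.univ_pi hs
  rw [withDensity_apply _ hmeas]
  have hind : (Set.pi Set.univ s).indicator
      (fun x : Fin k → ℝ => (∏ i, gaussianPDFReal 0 1 (x i)))
      = fun x => ∏ i, (s i).indicator (gaussianPDFReal 0 1) (x i) := by
    funext x
    by_cases hx : x ∈ Set.pi Set.univ s
    · rw [Set.indicator_of_mem hx]
      exact Finset.prod_congr rfl fun i _ =>
        (Set.indicator_of_mem (hx i (Set.mem_univ i)) _).symm
    · rw [Set.indicator_of_notMem hx]
      rw [Set.mem_univ_pi, not_forall] at hx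
      obtain ⟨i, hi⟩ := hx
      exact (Finset.prod_eq_zero (Finset.mem_univ i)
        (Set.indicator_of_notMem hi _)).symm
  have key : ∀ x : Fin k → ℝ, (Set.pi Set.univ s).indicator
        (fun x => ENNReal.ofReal (∏ i, gaussianPDFReal 0 1 (x i))) x
      = ENNReal.ofReal (∏ i, (s i).indicator (gaussianPDFReal 0 1) (x i)) := by
    intro x
    rw [← congrFun hind x]
    by_cases hx : x ∈ Set.pi Set.univ s
    · rw [Set.indicator_of_mem hx, Set.indicator_of_mem hx]
    · rw [Set.indicator_of_notMem hx, Set.indicator_of_notMem hx, ENNReal.ofReal_zero]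
  have hint : ∀ i : Fin k, Integrable ((s i).indicator (gaussianPDFReal 0 1)) :=
    fun i => (integrable_gaussianPDFReal 0 1).indicator (hs i)
  calc ∫⁻ x in Set.pi Set.univ s, ENNReal.ofReal (∏ i, gaussianPDFReal 0 1 (x i)) ∂volume
      = ∫⁻ x, (Set.pi Set.univ s).indicator
          (fun x => ENNReal.ofReal (∏ i, gaussianPDFReal 0 1 (x i))) x ∂volume :=
        by rw [lintegral_indicator hmeas]
    _ = ∫⁻ x : Fin k → ℝ, ENNReal.ofReal (∏ i, (s i).indicator (gaussianPDFReal 0 1) (x i)) ∂volume := by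
        simp only [key]
    _ = ENNReal.ofReal (∫ x : Fin k → ℝ, ∏ i, (s i).indicator (gaussianPDFReal 0 1) (x i)) :=
        (ofReal_integral_eq_lintegral_ofReal (Integrable.fintype_prod hint)
          (ae_of_all _ fun x => Finset.prod_nonneg fun i _ =>
            Set.indicator_nonneg (fun y _ => gaussianPDFReal_nonneg 0 1 y) _)).symm
    _ = ENNReal.ofReal (∏ i, ∫ x : ℝ, (s i).indicator (gaussianPDFReal 0 1) x) := by
        rw [integral_fintype_prod_volume_eq_prod]
    _ = ∏ i, (gaussianReal 0 1) (s i) := by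
        rw [ENNReal.ofReal_prod_of_nonneg fun i _ => integral_nonneg
          (Set.indicator_nonneg fun y _ => gaussianPDFReal_nonneg 0 1 y)]
        refine Finset.prod_congr rfl fun i _ => ?_
        rw [gaussianReal_apply_eq_integral 0 one_ne_zero (s i), integral_indicator (hs i)]


lemma exists_norm_bound (k : ℕ) (A : Matrix (Fin k) (Fin k) ℝ) (hA : IsUnit A) :
    ∃ c : ℝ, 0 < c ∧ ∀ x : Fin k → ℝ, ∑ i, (x i)^2 ≤ c * ∑ n, (A.mulVec x n)^2 := by
  set E := EuclideanSpace ℝ (Fin k)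
  let φ : E ≃L[ℝ] (Fin k → ℝ) := EuclideanSpace.equiv (Fin k) ℝ
  let T : E →ₗ[ℝ] E := φ.symm.toLinearMap ∘ₗ A.mulVecLin ∘ₗ φ.toLinearMap
  have hinj : Function.Injective T := by
    intro u w h
    simp only [T, LinearMap.coe_comp, Function.comp_apply, LinearEquiv.coe_coe,
      ContinuousLinearEquiv.coe_toLinearEquiv, Matrix.mulVecLin_apply] at h
    have := φ.symm.injective h
    have := Matrix.mulVec_injective_iff_isUnit.mpr hA this
    exact φ.injective this
  let Teq := LinearEquiv.ofInjectiveEndo T hinj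
  let L := LinearMap.toContinuousLinearMap (Teq.symm : E →ₗ[ℝ] E)
  have hLr : ∀ r : E, ‖r‖ ≤ ‖L‖ * ‖T r‖ := by
    intro r
    have h1 : L (T r) = r := by
      show Teq.symm (T r) = r
      have : T r = Teq r := by
        rw [show ⇑Teq = ⇑T from LinearEquiv.coe_ofInjectiveEndo T hinj]
      rw [this, LinearEquiv.symm_apply_apply]
    calc ‖r‖ = ‖L (T r)‖ := by rw [h1]
      _ ≤ ‖L‖ * ‖T r‖ := L.le_opNorm _
  have normsq : ∀ y : Fin k → ℝ, ‖(φ.symm y : E)‖^2 = ∑ i, (y i)^2 := by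
    intro y
    rw [EuclideanSpace.norm_eq, Real.sq_sqrt (by positivity)]
    refine Finset.sum_congr rfl fun i _ => ?_
    have : (φ.symm y : E) i = y i := rfl
    rw [this, Real.norm_eq_abs, sq_abs]
  refine ⟨max (‖L‖^2) 1, lt_of_lt_of_le one_pos (le_max_right _ _), fun x => ?_⟩
  have hTr : T (φ.symm x) = φ.symm (A.mulVec x) := by
    simp only [T, LinearMap.coe_comp, Function.comp_apply, LinearEquiv.coe_coe,
      ContinuousLinearEquiv.coe_toLinearEquiv, Matrix.mulVecLin_apply,
      ContinuousLinearEquiv.apply_symm_apply]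
  calc ∑ i, (x i)^2 = ‖(φ.symm x : E)‖^2 := (normsq x).symm
    _ ≤ (‖L‖ * ‖T (φ.symm x)‖)^2 := by
        apply pow_le_pow_left₀ (norm_nonneg _) (hLr _)
    _ = ‖L‖^2 * ‖(φ.symm (A.mulVec x) : E)‖^2 := by rw [hTr, mul_pow]
    _ = ‖L‖^2 * ∑ n, (A.mulVec x n)^2 := by rw [normsq]
    _ ≤ max (‖L‖^2) 1 * ∑ n, (A.mulVec x n)^2 := by
        apply mul_le_mul_of_nonneg_right (le_max_left _ _) (by positivity)

/-- For linearly independent unit vectors `v 0, …, v (k-1)` in `ℝ^k`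
generating a parallelepiped of volume `Δ`, the Gaussian mass `F s` of the interior
of the parallelepiped with faces normal to the `v n` at distance `2|⟨s, v n⟩|`
satisfies `F s ≤ Δ⁻¹ ∏ n, (2|⟨s, v n⟩|/√(2π))` for all `s`, and
`F s ≥ (1 - C ‖s‖_Λ²) Δ⁻¹ ∏ n, (2|⟨s, v n⟩|/√(2π))` for some constant `C > 0`. -/
theorem stmt_4 (k : ℕ) (hk : 0 < k)
    (v : Fin k → EuclideanSpace ℝ (Fin k))
    (hunit : ∀ n, ‖v n‖ = 1)
    (hli : LinearIndependent ℝ v)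
    (Δ : ℝ)
    (hΔ : Δ = Real.sqrt (Matrix.det (Matrix.of fun m n : Fin k => (⟪v m, v n⟫ : ℝ))))
    (F : EuclideanSpace ℝ (Fin k) → ℝ)
    (hF : ∀ s, F s = (stdGaussian k {r | ∀ n, |⟪r, v n⟫| ≤ |⟪s, v n⟫|}).toReal) :
    (∀ s, F s ≤ Δ⁻¹ * ∏ n, (2 * |⟪s, v n⟫| / Real.sqrt (2 * Real.pi))) ∧
    ∃ C > (0 : ℝ), ∀ s,
      (1 - C * (⨆ n, |⟪s, v n⟫|) ^ 2) *
        (Δ⁻¹ * ∏ n, (2 * |⟪s, v n⟫| / Real.sqrt (2 * Real.pi))) ≤ F s := by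
  classical
  have hk' : Nonempty (Fin k) := Fin.pos_iff_nonempty.mp hk
  set A : Matrix (Fin k) (Fin k) ℝ := Matrix.of fun n i => v n i with hA
  have hli' : LinearIndependent ℝ (fun n => A n) := by
    have := hli.map' (WithLp.linearEquiv 2 ℝ (Fin k → ℝ)).toLinearMap (WithLp.linearEquiv 2 ℝ (Fin k → ℝ)).ker
    exact this
  have hAunit : IsUnit A := Matrix.linearIndependent_rows_iff_isUnit.mp hli'
  have hdet : A.det ≠ 0 :=
    isUnit_iff_ne_zero.mp ((Matrix.isUnit_iff_isUnit_det A).mp hAunit)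
  have hGram : (Matrix.of fun m n : Fin k => (⟪v m, v n⟫ : ℝ)) = A * A.transpose := by
    ext m n
    simp [Matrix.mul_apply, PiLp.inner_apply, RCLike.inner_apply, Matrix.transpose_apply, hA]
    exact Finset.sum_congr rfl fun i _ => mul_comm _ _
  have hΔA : Δ = |A.det| := by
    rw [hΔ, hGram, Matrix.det_mul, Matrix.det_transpose, Real.sqrt_mul_self_eq_abs]
  have hΔpos : 0 < Δ := hΔA ▸ abs_pos.mpr hdet
  obtain ⟨c, hc0, hc⟩ := exists_norm_bound k A hAunit
  set C := max (c * k / 2) 1 with hC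
  have hCpos : 0 < C := lt_of_lt_of_le one_pos (le_max_right _ _)
  set sq2π := Real.sqrt (2 * π) with hsq
  have hsqpos : 0 < sq2π := Real.sqrt_pos.mpr (by positivity)
  have hgprod : ∀ x : Fin k → ℝ, (∏ i, gaussianPDFReal 0 1 (x i))
      = sq2π⁻¹ ^ k * Real.exp (-(∑ i, (x i)^2) / 2) := by
    intro x
    simp only [gaussianPDFReal, NNReal.coe_one, mul_one, sub_zero]
    rw [Finset.prod_mul_distrib, Finset.prod_const, Finset.card_univ, Fintype.card_fin,
      ← Real.exp_sum]
    congr 2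
    rw [← Finset.sum_div, Finset.sum_neg_distrib]
  have hmeasg : Measurable fun x : Fin k → ℝ =>
      ENNReal.ofReal (∏ i, gaussianPDFReal 0 1 (x i)) :=
    ENNReal.measurable_ofReal.comp (Finset.measurable_prod _ fun i _ =>
      (measurable_gaussianPDFReal 0 1).comp (measurable_pi_apply i))
  have main : ∀ s : EuclideanSpace ℝ (Fin k),
      stdGaussian k {r | ∀ n, |⟪r, v n⟫| ≤ |⟪s, v n⟫|}
        ≤ ENNReal.ofReal (Δ⁻¹ * ∏ n, (2 * |⟪s, v n⟫| / sq2π)) ∧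
      ENNReal.ofReal ((1 - C * (⨆ n, |⟪s, v n⟫|) ^ 2) *
          (Δ⁻¹ * ∏ n, (2 * |⟪s, v n⟫| / sq2π)))
        ≤ stdGaussian k {r | ∀ n, |⟪r, v n⟫| ≤ |⟪s, v n⟫|} := by
    intro s
    set a : Fin k → ℝ := fun n => |⟪s, v n⟫| with haa
    have ha : ∀ n, 0 ≤ a n := fun n => abs_nonneg _
    set asup := ⨆ n, a n with hasup'
    have hax : ∀ n, a n ≤ asup := fun n => le_ciSup (Set.Finite.bddAbove (Set.finite_range a)) n
    have hasup0 : 0 ≤ asup := le_trans (ha ⟨0, hk⟩) (hax _)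
    set Box : Set (Fin k → ℝ) := Set.pi Set.univ (fun n => Set.Icc (-(a n)) (a n)) with hBox
    have hBoxm : MeasurableSet Box := MeasurableSet.univ_pi fun n => measurableSet_Icc
    have hvolBox : volume Box = ENNReal.ofReal (∏ n, 2 * a n) := by
      rw [hBox, volume_pi_pi]
      simp only [Real.volume_Icc]
      rw [← ENNReal.ofReal_prod_of_nonneg (fun i _ => by have := ha i; linarith)]
      congr 1
      exact Finset.prod_congr rfl fun n _ => by ring
    set T : (Fin k → ℝ) →ₗ[ℝ] (Fin k → ℝ) := Matrix.toLin' A with hT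
    have hTapp : ∀ (x : Fin k → ℝ) n, T x n = ∑ i, v n i * x i := by
      intro x n
      simp [hT, Matrix.toLin'_apply, Matrix.mulVec, dotProduct, hA]
    have hTdet : LinearMap.det T = A.det := LinearMap.det_toLin' A
    have hTcont : Continuous T := T.continuous_of_finiteDimensional
    have hpre : (MeasurableEquiv.toLp 2 (Fin k → ℝ)) ⁻¹'
        {r : EuclideanSpace ℝ (Fin k) | ∀ n, |⟪r, v n⟫| ≤ a n} = T ⁻¹' Box := by
      ext x
      simp only [Set.mem_preimage, Set.mem_setOf_eq, hBox, Set.mem_pi, Set.mem_univ,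
        true_implies, Set.mem_Icc, ← abs_le]
      refine forall_congr' fun n => ?_
      have h1 : ⟪(MeasurableEquiv.toLp 2 (Fin k → ℝ)) x, v n⟫ = ∑ i, x i * v n i := by
        rw [PiLp.inner_apply]
        refine Finset.sum_congr rfl fun i _ => ?_
        simp [RCLike.inner_apply, mul_comm]
      rw [h1, hTapp]
      rw [show ∑ i, x i * v n i = ∑ i, v n i * x i from
        Finset.sum_congr rfl fun i _ => mul_comm _ _]
    have hSm : MeasurableSet {r : EuclideanSpace ℝ (Fin k) | ∀ n, |⟪r, v n⟫| ≤ a n} := by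
      rw [← MeasurableEquiv.measurableSet_preimage (MeasurableEquiv.toLp 2 (Fin k → ℝ))]
      rw [hpre]
      exact hBoxm.preimage hTcont.measurable
    have hγ : stdGaussian k {r : EuclideanSpace ℝ (Fin k) | ∀ n, |⟪r, v n⟫| ≤ a n}
        = ∫⁻ x in T ⁻¹' Box, ENNReal.ofReal (∏ i, gaussianPDFReal 0 1 (x i)) ∂volume := by
      rw [_root_.stdGaussian, Measure.map_apply (MeasurableEquiv.measurable _) hSm, hpre,
        pi_gaussian_eq, withDensity_apply _ (hBoxm.preimage hTcont.measurable)]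
    have hvolP : volume (T ⁻¹' Box)
        = ENNReal.ofReal Δ⁻¹ * ENNReal.ofReal (∏ n, 2 * a n) := by
      rw [Measure.addHaar_preimage_linearMap volume (hTdet ▸ hdet), hvolBox, hTdet]
      congr 2
      rw [abs_inv, ← hΔA]
    have halg : Δ⁻¹ * ∏ n, (2 * a n / sq2π) = sq2π⁻¹ ^ k * (Δ⁻¹ * ∏ n, (2 * a n)) := by
      rw [Finset.prod_div_distrib, Finset.prod_const, Finset.card_univ, Fintype.card_fin,
        inv_pow]
      ring
    have hΔinv0 : (0:ℝ) ≤ Δ⁻¹ := inv_nonneg.mpr hΔpos.le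
    constructor
    · rw [hγ]
      calc ∫⁻ x in T ⁻¹' Box, ENNReal.ofReal (∏ i, gaussianPDFReal 0 1 (x i)) ∂volume
          ≤ ∫⁻ _x in T ⁻¹' Box, ENNReal.ofReal (sq2π⁻¹ ^ k) ∂volume := by
            refine setLIntegral_mono measurable_const fun x _ => ?_
            apply ENNReal.ofReal_le_ofReal
            rw [hgprod x]
            calc sq2π⁻¹ ^ k * Real.exp (-(∑ i, (x i)^2) / 2)
                ≤ sq2π⁻¹ ^ k * 1 := by
                  apply mul_le_mul_of_nonneg_left _ (by positivity)
                  apply Real.exp_le_one_iff.mpr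
                  have : (0:ℝ) ≤ ∑ i, (x i)^2 := by positivity
                  linarith
              _ = sq2π⁻¹ ^ k := mul_one _
        _ = ENNReal.ofReal (sq2π⁻¹ ^ k) * volume (T ⁻¹' Box) := setLIntegral_const _ _
        _ = ENNReal.ofReal (Δ⁻¹ * ∏ n, (2 * a n / sq2π)) := by
            rw [hvolP, ← mul_assoc, ← ENNReal.ofReal_mul (by positivity),
              ← ENNReal.ofReal_mul (by positivity), halg, mul_assoc]
    · by_cases hδ : 1 - C * asup ^ 2 ≤ 0
      · rw [ENNReal.ofReal_eq_zero.mpr]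
        · exact bot_le
        · exact mul_nonpos_of_nonpos_of_nonneg hδ
            (mul_nonneg hΔinv0 (Finset.prod_nonneg fun n _ => by positivity))
      · push_neg at hδ
        rw [hγ]
        have hbound : ∀ x ∈ T ⁻¹' Box,
            ENNReal.ofReal (sq2π⁻¹ ^ k * (1 - C * asup ^ 2))
              ≤ ENNReal.ofReal (∏ i, gaussianPDFReal 0 1 (x i)) := by
          intro x hx
          apply ENNReal.ofReal_le_ofReal
          rw [hgprod x]
          apply mul_le_mul_of_nonneg_left _ (by positivity)
          have hstep : ∀ n, (A.mulVec x n)^2 ≤ asup^2 := by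
            intro n
            have h2 := hx n (Set.mem_univ n)
            rw [Set.mem_Icc] at h2
            have h3 : A.mulVec x n = T x n := by simp [hT, Matrix.toLin'_apply]
            have hxn : |A.mulVec x n| ≤ a n := by rw [abs_le, h3]; exact h2
            calc (A.mulVec x n)^2 = |A.mulVec x n|^2 := (sq_abs _).symm
              _ ≤ asup^2 := pow_le_pow_left₀ (abs_nonneg _) (hxn.trans (hax n)) 2
          have hsum2 : ∑ n, (A.mulVec x n)^2 ≤ k * asup^2 := by
            calc ∑ n, (A.mulVec x n)^2 ≤ ∑ _n : Fin k, asup^2 :=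
                Finset.sum_le_sum fun n _ => hstep n
              _ = k * asup^2 := by
                rw [Finset.sum_const, Finset.card_univ, Fintype.card_fin, nsmul_eq_mul]
          have hsum : ∑ i, (x i)^2 ≤ c * (k * asup^2) :=
            (hc x).trans (mul_le_mul_of_nonneg_left hsum2 hc0.le)
          calc 1 - C * asup ^ 2 ≤ 1 - (∑ i, (x i)^2) / 2 := by
                have h4 : (∑ i, (x i)^2) / 2 ≤ C * asup^2 := by
                  calc (∑ i, (x i)^2) / 2 ≤ (c * (k * asup^2)) / 2 := by linarith
                    _ = (c * k / 2) * asup^2 := by ring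
                    _ ≤ C * asup^2 :=
                      mul_le_mul_of_nonneg_right (le_max_left _ _) (by positivity)
                linarith
            _ ≤ Real.exp (-(∑ i, (x i)^2) / 2) := by
                have h5 := Real.add_one_le_exp (-(∑ i, (x i)^2) / 2)
                linarith
        calc ENNReal.ofReal ((1 - C * asup ^ 2) * (Δ⁻¹ * ∏ n, (2 * a n / sq2π)))
            = ENNReal.ofReal (sq2π⁻¹ ^ k * (1 - C * asup ^ 2)) * volume (T ⁻¹' Box) := by
              rw [hvolP, ← ENNReal.ofReal_mul hΔinv0,
                ← ENNReal.ofReal_mul (mul_nonneg (by positivity) hδ.le)]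
              congr 1
              rw [halg]
              ring
          _ = ∫⁻ _x in T ⁻¹' Box,
                ENNReal.ofReal (sq2π⁻¹ ^ k * (1 - C * asup ^ 2)) ∂volume :=
              (setLIntegral_const _ _).symm
          _ ≤ ∫⁻ x in T ⁻¹' Box, ENNReal.ofReal (∏ i, gaussianPDFReal 0 1 (x i)) ∂volume :=
              setLIntegral_mono hmeasg hbound
  constructor
  · intro s
    rw [hF s]
    refine ENNReal.toReal_le_of_le_ofReal ?_ (main s).1
    exact mul_nonneg (inv_nonneg.mpr hΔpos.le) (Finset.prod_nonneg fun n _ => by positivity)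
  · refine ⟨C, hCpos, fun s => ?_⟩
    rw [hF s]
    have h2 : stdGaussian k {r | ∀ n, |⟪r, v n⟫| ≤ |⟪s, v n⟫|} ≠ ⊤ :=
      ne_top_of_le_ne_top ENNReal.ofReal_ne_top (main s).1
    exact (ENNReal.ofReal_le_iff_le_toReal h2).mp (main s).2
end

section
/- Let v_1, …, v_k be linearly independent unit vectors in ℝ^d. Then for every t > 0, Φ_k(t) ≤ γ_d({s ∈ ℝ^d : |⟨s, v_n⟩| < t for all 1 ≤ n ≤ k}) ≤ Φ_1(t). -/
open MeasureTheory Filter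
open scoped RealInnerProductSpace Real ENNReal NNReal

section Aux
open ProbabilityTheory Set

lemma lintegral_pi_prod : ∀ {n : ℕ} (f : Fin n → ℝ → ℝ≥0∞), (∀ i, Measurable (f i)) →
    ∫⁻ x, ∏ i, f i (x i) ∂(Measure.pi fun _ : Fin n => (volume : Measure ℝ))
      = ∏ i, ∫⁻ y, f i y := by
  intro n
  induction n with
  | zero =>
    intro f _
    simp [Measure.pi_of_empty (fun _ : Fin 0 => (volume : Measure ℝ))]
  | succ n ih =>
    intro f hf
    have mp := measurePreserving_piFinSuccAbove (fun _ : Fin (n + 1) => (volume : Measure ℝ)) 0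
    have hH : Measurable fun p : ℝ × (Fin n → ℝ) =>
        f 0 p.1 * ∏ i : Fin n, f (Fin.succ i) (p.2 i) := by
      apply Measurable.mul
      · exact (hf 0).comp measurable_fst
      · exact (Finset.measurable_prod _ fun i _ =>
          ((hf _).comp ((measurable_pi_apply i).comp measurable_snd)))
    have key : ∫⁻ x, ∏ i, f i (x i) ∂(Measure.pi fun _ : Fin (n + 1) => (volume : Measure ℝ))
        = ∫⁻ p, f 0 p.1 * ∏ i : Fin n, f (Fin.succ i) (p.2 i)
          ∂((volume : Measure ℝ).prod (Measure.pi fun _ : Fin n => (volume : Measure ℝ))) := by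
      rw [← mp.lintegral_comp hH]
      congr 1
      funext x
      simp [MeasurableEquiv.piFinSuccAbove, Fin.prod_univ_succ, Fin.zero_succAbove, Fin.tail]
    have hg : AEMeasurable (fun y : Fin n → ℝ => ∏ i : Fin n, f (Fin.succ i) (y i))
        (Measure.pi fun _ : Fin n => (volume : Measure ℝ)) :=
      (Finset.measurable_prod _ fun i _ =>
        ((hf _).comp (measurable_pi_apply i))).aemeasurable
    rw [key, lintegral_prod_mul (hf 0).aemeasurable hg,
      ih (fun i => f (Fin.succ i)) (fun i => hf _), Fin.prod_univ_succ]

lemma pi_gaussian (n : ℕ) :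
    (Measure.pi fun _ : Fin n => gaussianReal 0 1)
      = (Measure.pi fun _ : Fin n => (volume : Measure ℝ)).withDensity
          (fun x => ∏ i, gaussianPDF 0 1 (x i)) := by
  refine (Measure.pi_eq (μ := fun _ : Fin n => gaussianReal 0 1) fun s hs => ?_)
  rw [withDensity_apply _ (MeasurableSet.univ_pi hs),
    ← lintegral_indicator (MeasurableSet.univ_pi hs)]
  have hpt : ∀ x : Fin n → ℝ,
      (Set.univ.pi s).indicator (fun x => ∏ i, gaussianPDF 0 1 (x i)) x
        = ∏ i, (s i).indicator (gaussianPDF 0 1) (x i) := by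
    intro x
    by_cases hx : x ∈ Set.univ.pi s
    · rw [Set.indicator_of_mem hx]
      exact Finset.prod_congr rfl fun i _ =>
        (Set.indicator_of_mem (hx i (Set.mem_univ i)) _).symm
    · rw [Set.indicator_of_notMem hx]
      rw [Set.mem_univ_pi] at hx
      push_neg at hx
      obtain ⟨i, hi⟩ := hx
      exact (Finset.prod_eq_zero (Finset.mem_univ i)
        (Set.indicator_of_notMem hi _)).symm
  simp_rw [hpt]
  rw [lintegral_pi_prod _ (fun i => (measurable_gaussianPDF 0 1).indicator (hs i))]
  refine Finset.prod_congr rfl fun i _ => ?_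
  rw [lintegral_indicator (hs i) _, ← gaussianReal_apply 0 one_ne_zero]

lemma map_withDensity_equiv {α β : Type*} [MeasurableSpace α] [MeasurableSpace β]
    (e : α ≃ᵐ β) (ν : Measure α) (P : β → ℝ≥0∞) (hP : Measurable P) :
    (ν.withDensity (P ∘ e)).map e = (ν.map e).withDensity P := by
  ext s hs
  rw [Measure.map_apply e.measurable hs, withDensity_apply _ (e.measurable hs),
    withDensity_apply _ hs, setLIntegral_map hs hP e.measurable]
  rfl

noncomputable def gaussDensity (m : ℕ) : EuclideanSpace ℝ (Fin m) → ℝ≥0∞ :=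
  fun x => ENNReal.ofReal ((Real.sqrt (2 * π))⁻¹ ^ m * Real.exp (-‖x‖ ^ 2 / 2))

lemma measurable_gaussDensity (m : ℕ) : Measurable (gaussDensity m) := by
  unfold gaussDensity
  fun_prop

lemma gaussDensity_comp_symm (m : ℕ) (x : Fin m → ℝ) :
    gaussDensity m ((MeasurableEquiv.toLp 2 (Fin m → ℝ)) x)
      = ∏ i, gaussianPDF 0 1 (x i) := by
  have hnn : ∀ i, i ∈ (Finset.univ : Finset (Fin m)) → 0 ≤ gaussianPDFReal 0 1 (x i) :=
    fun i _ => gaussianPDFReal_nonneg 0 1 (x i)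
  rw [show (fun i => gaussianPDF 0 1 (x i)) = fun i => ENNReal.ofReal (gaussianPDFReal 0 1 (x i))
    from rfl, ← ENNReal.ofReal_prod_of_nonneg hnn]
  unfold gaussDensity
  congr 1
  have hnorm : ‖(MeasurableEquiv.toLp 2 (Fin m → ℝ)) x‖ ^ 2 = ∑ i, (x i) ^ 2 := by
    rw [EuclideanSpace.norm_eq, Real.sq_sqrt (Finset.sum_nonneg fun i _ => sq_nonneg _)]
    exact Finset.sum_congr rfl fun i _ => sq_abs (x i)
  rw [hnorm]
  simp only [gaussianPDFReal]
  rw [Finset.prod_mul_distrib, Finset.prod_const, Finset.card_univ, Fintype.card_fin,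
    ← Real.exp_sum]
  push_cast
  rw [mul_one, ← Finset.sum_div, ← Finset.sum_neg_distrib]
  simp

lemma stdGaussian_eq_withDensity (m : ℕ) :
    stdGaussian m = (volume : Measure (EuclideanSpace ℝ (Fin m))).withDensity (gaussDensity m) := by
  have h1 : (fun x : Fin m → ℝ => ∏ i, gaussianPDF 0 1 (x i))
      = gaussDensity m ∘ (MeasurableEquiv.toLp 2 (Fin m → ℝ)) := by
    funext x; exact (gaussDensity_comp_symm m x).symm
  rw [_root_.stdGaussian, pi_gaussian, h1,
    map_withDensity_equiv (MeasurableEquiv.toLp 2 (Fin m → ℝ)) _ _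
      (measurable_gaussDensity m), ← volume_pi, ← MeasurableEquiv.symm_symm (MeasurableEquiv.toLp 2 (Fin m → ℝ)),
    ((EuclideanSpace.volume_preserving_symm_measurableEquiv_toLp (Fin m)).symm _).map_eq]

lemma gaussDensity_norm (m : ℕ) {x y : EuclideanSpace ℝ (Fin m)} (h : ‖x‖ = ‖y‖) :
    gaussDensity m x = gaussDensity m y := by unfold gaussDensity; rw [h]

lemma stdGaussian_map_isometry (m : ℕ)
    (f : EuclideanSpace ℝ (Fin m) ≃ₗᵢ[ℝ] EuclideanSpace ℝ (Fin m)) :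
    (stdGaussian m).map f = stdGaussian m := by
  have hd : gaussDensity m ∘ (f.toHomeomorph.toMeasurableEquiv).symm = gaussDensity m := by
    funext y
    exact gaussDensity_norm m (by simp)
  have hcoe : (⇑f : EuclideanSpace ℝ (Fin m) → EuclideanSpace ℝ (Fin m))
      = ⇑(f.toHomeomorph.toMeasurableEquiv) := rfl
  rw [stdGaussian_eq_withDensity, hcoe,
    show gaussDensity m = (gaussDensity m ∘ (f.toHomeomorph.toMeasurableEquiv).symm)
      ∘ f.toHomeomorph.toMeasurableEquiv by funext x; simp [hd],
    map_withDensity_equiv _ _ _ ((measurable_gaussDensity m).comp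
      (f.toHomeomorph.toMeasurableEquiv).symm.measurable)]
  rw [show Measure.map (⇑f.toHomeomorph.toMeasurableEquiv) volume = volume from
    f.measurePreserving.map_eq, hd]
  congr 1
  funext x
  exact gaussDensity_norm m (f.norm_map x).symm

instance stdGaussian_isProbabilityMeasure (m : ℕ) : IsProbabilityMeasure (stdGaussian m) :=
  Measure.isProbabilityMeasure_map
    ((MeasurableEquiv.toLp 2 (Fin m → ℝ)).measurable.aemeasurable)

lemma pi_gaussian_map_castLE {k d : ℕ} (hkd : k ≤ d) :
    (Measure.pi fun _ : Fin d => gaussianReal 0 1).map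
        (fun (x : Fin d → ℝ) (i : Fin k) => x (Fin.castLE hkd i))
      = Measure.pi fun _ : Fin k => gaussianReal 0 1 := by
  have hmeas : Measurable (fun (x : Fin d → ℝ) (i : Fin k) => x (Fin.castLE hkd i)) :=
    measurable_pi_lambda _ fun i => measurable_pi_apply _
  refine (Measure.pi_eq (μ := fun _ : Fin k => gaussianReal 0 1) fun s hs => ?_).symm
  rw [Measure.map_apply hmeas (MeasurableSet.univ_pi hs)]
  classical
  set t : Fin d → Set ℝ := fun j => if h : (j : ℕ) < k then s ⟨j, h⟩ else Set.univ with ht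
  have hpre : (fun (x : Fin d → ℝ) (i : Fin k) => x (Fin.castLE hkd i)) ⁻¹' Set.univ.pi s
      = Set.univ.pi t := by
    ext x
    simp only [Set.mem_preimage, Set.mem_univ_pi, ht]
    constructor
    · intro h j
      by_cases hj : (j : ℕ) < k
      · rw [dif_pos hj]
        have := h ⟨j, hj⟩
        convert this using 2
        exact Fin.ext rfl
      · rw [dif_neg hj]; exact Set.mem_univ _
    · intro h i
      have := h (Fin.castLE hkd i)
      rw [dif_pos (by simpa using i.2)] at this
      convert this using 2
      exact Fin.ext rfl
  rw [hpre, Measure.pi_pi]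
  have hsub : (Finset.univ.map (Fin.castLEEmb hkd)) ⊆ (Finset.univ : Finset (Fin d)) :=
    Finset.subset_univ _
  rw [← Finset.prod_subset hsub (fun j _ hj => ?_), Finset.prod_map]
  · refine Finset.prod_congr rfl fun i _ => ?_
    have : t (Fin.castLEEmb hkd i) = s i := by
      rw [ht]
      simp only [Fin.castLEEmb_apply]
      rw [dif_pos (by simpa using i.2)]
      rfl
    rw [this]
  · have hj' : ¬ ((j : ℕ) < k) := by
      intro hlt
      exact hj (Finset.mem_map.mpr ⟨⟨(j : ℕ), hlt⟩, Finset.mem_univ _, by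
        simp [Fin.castLEEmb_apply, Fin.ext_iff]⟩)
    rw [ht]
    simp only [dif_neg hj']
    exact measure_univ

lemma pi_gaussian_map_eval {m : ℕ} (i : Fin m) :
    (Measure.pi fun _ : Fin m => gaussianReal 0 1).map (fun x => x i) = gaussianReal 0 1 := by
  ext s hs
  classical
  rw [Measure.map_apply (measurable_pi_apply i) hs, ← Set.univ_pi_update_univ, Measure.pi_pi]
  refine Finset.prod_eq_single i (fun j _ hj => ?_) (fun h => absurd (Finset.mem_univ i) h) |>.trans ?_
  · rw [Function.update_of_ne hj]; exact measure_univ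
  · rw [Function.update_self]

lemma exists_adapted_basis {d : ℕ} {ι : Set (Fin d)} (w : Fin d → EuclideanSpace ℝ (Fin d))
    (hw : Orthonormal ℝ (ι.restrict w)) :
    ∃ b : OrthonormalBasis (Fin d) ℝ (EuclideanSpace ℝ (Fin d)), ∀ i ∈ ι, b i = w i := by
  refine hw.exists_orthonormalBasis_extension_of_card_eq ?_
  simp

lemma stdGaussian_map_inner {d : ℕ} (hd : 0 < d) (u : EuclideanSpace ℝ (Fin d)) (hu : ‖u‖ = 1) :
    (stdGaussian d).map (fun s => ⟪s, u⟫) = gaussianReal 0 1 := by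
  set z0 : Fin d := ⟨0, hd⟩
  have h0 : Orthonormal ℝ (({z0} : Set (Fin d)).restrict (fun _ : Fin d => u)) := by
    constructor
    · intro i
      exact hu
    · intro i j hij
      exact absurd (Subtype.ext ((i.2 : (i : Fin d) ∈ ({z0} : Set (Fin d))).trans
        ((j.2 : (j : Fin d) ∈ ({z0} : Set (Fin d)))).symm)) hij
  obtain ⟨b, hb⟩ := exists_adapted_basis _ h0
  have hbz : b z0 = u := hb z0 rfl
  have hfun : (fun s : EuclideanSpace ℝ (Fin d) => ⟪s, u⟫)
      = (fun y : EuclideanSpace ℝ (Fin d) => y z0) ∘ ⇑b.repr := by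
    funext s
    simp only [Function.comp_apply]
    rw [b.repr_apply_apply, hbz, real_inner_comm]
  have hev : Measurable (fun y : EuclideanSpace ℝ (Fin d) => y z0) :=
    (measurable_pi_apply z0).comp (MeasurableEquiv.toLp 2 (Fin d → ℝ)).symm.measurable
  rw [hfun, ← Measure.map_map hev b.repr.continuous.measurable,
    stdGaussian_map_isometry d b.repr, _root_.stdGaussian,
    Measure.map_map hev (MeasurableEquiv.toLp 2 (Fin d → ℝ)).measurable]
  exact pi_gaussian_map_eval z0

lemma stdGaussian_map_eval {m : ℕ} (i : Fin m) :
    (stdGaussian m).map (fun y => y i) = gaussianReal 0 1 := by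
  have hev : Measurable (fun y : EuclideanSpace ℝ (Fin m) => y i) :=
    (measurable_pi_apply i).comp (MeasurableEquiv.toLp 2 (Fin m → ℝ)).symm.measurable
  rw [_root_.stdGaussian,
    Measure.map_map hev (MeasurableEquiv.toLp 2 (Fin m → ℝ)).measurable]
  exact pi_gaussian_map_eval i

lemma stdGaussian_map_self (m : ℕ) :
    (stdGaussian m).map (MeasurableEquiv.toLp 2 (Fin m → ℝ)).symm
      = Measure.pi fun _ : Fin m => gaussianReal 0 1 := by
  rw [_root_.stdGaussian, Measure.map_map (MeasurableEquiv.toLp 2 (Fin m → ℝ)).symm.measurable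
    (MeasurableEquiv.toLp 2 (Fin m → ℝ)).measurable,
    MeasurableEquiv.symm_comp_self, Measure.map_id]

lemma stdGaussian_map_proj {k d : ℕ} (hkd : k ≤ d)
    (F : EuclideanSpace ℝ (Fin d) → EuclideanSpace ℝ (Fin k))
    (b : OrthonormalBasis (Fin d) ℝ (EuclideanSpace ℝ (Fin d)))
    (hF : ∀ s i, F s i = b.repr s (Fin.castLE hkd i)) :
    (stdGaussian d).map F = stdGaussian k := by
  set R : (Fin d → ℝ) → (Fin k → ℝ) := fun x i => x (Fin.castLE hkd i) with hRdef
  have hR : Measurable R := measurable_pi_lambda _ fun i => measurable_pi_apply _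
  have hFeq : F = (⇑(MeasurableEquiv.toLp 2 (Fin k → ℝ)) ∘ R
      ∘ ⇑(MeasurableEquiv.toLp 2 (Fin d → ℝ)).symm) ∘ ⇑b.repr := by
    funext s
    exact PiLp.ext fun i => hF s i
  have hmeas1 : Measurable (⇑(MeasurableEquiv.toLp 2 (Fin k → ℝ)) ∘ R
      ∘ ⇑(MeasurableEquiv.toLp 2 (Fin d → ℝ)).symm) :=
    ((MeasurableEquiv.toLp 2 (Fin k → ℝ)).measurable.comp hR).comp
      (MeasurableEquiv.toLp 2 (Fin d → ℝ)).symm.measurable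
  rw [hFeq, ← Measure.map_map hmeas1 b.repr.continuous.measurable,
    stdGaussian_map_isometry d b.repr,
    show (⇑(MeasurableEquiv.toLp 2 (Fin k → ℝ)) ∘ R
      ∘ ⇑(MeasurableEquiv.toLp 2 (Fin d → ℝ)).symm)
      = ⇑(MeasurableEquiv.toLp 2 (Fin k → ℝ))
        ∘ (R ∘ ⇑(MeasurableEquiv.toLp 2 (Fin d → ℝ)).symm) from rfl,
    ← Measure.map_map (MeasurableEquiv.toLp 2 (Fin k → ℝ)).measurable
      (hR.comp (MeasurableEquiv.toLp 2 (Fin d → ℝ)).symm.measurable),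
    ← Measure.map_map hR (MeasurableEquiv.toLp 2 (Fin d → ℝ)).symm.measurable,
    stdGaussian_map_self d, pi_gaussian_map_castLE hkd, ← _root_.stdGaussian]

lemma stdGaussian_sphere_zero {k : ℕ} (hk : 0 < k) (t : ℝ) :
    stdGaussian k {z : EuclideanSpace ℝ (Fin k) | ‖z‖ = t} = 0 := by
  haveI : Nonempty (Fin k) := ⟨⟨0, hk⟩⟩
  haveI : Nontrivial (EuclideanSpace ℝ (Fin k)) := by
    refine nontrivial_of_ne (EuclideanSpace.single ⟨0, hk⟩ (1 : ℝ)) 0 fun h => ?_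
    have := congr_arg (fun z : EuclideanSpace ℝ (Fin k) => z ⟨0, hk⟩) h
    simpa using this
  have habs : stdGaussian k ≪ (volume : Measure (EuclideanSpace ℝ (Fin k))) := by
    rw [stdGaussian_eq_withDensity]
    exact withDensity_absolutelyContinuous _ _
  refine habs ?_
  have : {z : EuclideanSpace ℝ (Fin k) | ‖z‖ = t} = Metric.sphere 0 t := by
    ext z; simp [Metric.mem_sphere, dist_zero_right]
  rw [this]
  exact Measure.addHaar_sphere volume 0 t

lemma stdGaussian_ball {k : ℕ} (hk : 0 < k) (t : ℝ) :
    stdGaussian k {z : EuclideanSpace ℝ (Fin k) | ‖z‖ < t}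
      = stdGaussian k {z : EuclideanSpace ℝ (Fin k) | ‖z‖ ≤ t} := by
  refine le_antisymm (measure_mono fun z hz => le_of_lt (Set.mem_setOf_eq ▸ hz)) ?_
  have hsub : {z : EuclideanSpace ℝ (Fin k) | ‖z‖ ≤ t}
      ⊆ {z | ‖z‖ < t} ∪ {z | ‖z‖ = t} := by
    intro z hz
    have hz' : ‖z‖ ≤ t := hz
    rcases lt_or_eq_of_le hz' with h | h
    · exact Or.inl h
    · exact Or.inr h
  calc stdGaussian k {z : EuclideanSpace ℝ (Fin k) | ‖z‖ ≤ t}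
      ≤ stdGaussian k ({z | ‖z‖ < t} ∪ {z | ‖z‖ = t}) := measure_mono hsub
    _ ≤ stdGaussian k {z | ‖z‖ < t} + stdGaussian k {z | ‖z‖ = t} := measure_union_le _ _
    _ = stdGaussian k {z | ‖z‖ < t} := by rw [stdGaussian_sphere_zero hk, add_zero]

lemma Phi_one_eq (t : ℝ) : Phi 1 t = (gaussianReal 0 1 {y : ℝ | |y| ≤ t}).toReal := by
  have hnorm : ∀ x : EuclideanSpace ℝ (Fin 1), ‖x‖ = |x 0| := by
    intro x
    rw [EuclideanSpace.norm_eq]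
    simp [Real.sqrt_sq_eq_abs]
  have hset : {x : EuclideanSpace ℝ (Fin 1) | ‖x‖ ≤ t}
      = (fun x : EuclideanSpace ℝ (Fin 1) => x 0) ⁻¹' {y : ℝ | |y| ≤ t} := by
    ext x; simp [hnorm]
  have hev : Measurable (fun y : EuclideanSpace ℝ (Fin 1) => y 0) :=
    (measurable_pi_apply 0).comp (MeasurableEquiv.toLp 2 (Fin 1 → ℝ)).symm.measurable
  have hA : MeasurableSet {y : ℝ | |y| ≤ t} :=
    measurableSet_le (measurable_id.abs) measurable_const
  rw [Phi, hset, ← Measure.map_apply hev hA, stdGaussian_map_eval (0 : Fin 1)]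

end Aux

open ProbabilityTheory Set

/-- For linearly independent unit vectors `v 0, …, v (k-1)` in `ℝ^d`
and every `t > 0`, `Φ_k(t) ≤ γ_d({s : |⟨s, v n⟩| < t for all n}) ≤ Φ_1(t)`. -/
theorem stmt_12 (k d : ℕ) (hk : 0 < k) (hd : 0 < d)
    (v : Fin k → EuclideanSpace ℝ (Fin d))
    (hunit : ∀ n, ‖v n‖ = 1)
    (hli : LinearIndependent ℝ v) :
    ∀ t : ℝ, 0 < t →
      Phi k t ≤ (stdGaussian d {s | ∀ n, |⟪s, v n⟫| < t}).toReal ∧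
      (stdGaussian d {s | ∀ n, |⟪s, v n⟫| < t}).toReal ≤ Phi 1 t := by
  intro t ht
  have hkd : k ≤ d := by
    have := hli.fintype_card_le_finrank
    rwa [finrank_euclideanSpace_fin, Fintype.card_fin] at this
  set S : Set (EuclideanSpace ℝ (Fin d)) := {s | ∀ n, |⟪s, v n⟫| < t} with hS
  constructor
  · -- lower bound
    set W : Submodule ℝ (EuclideanSpace ℝ (Fin d)) := Submodule.span ℝ (Set.range v) with hW
    have hfinW : Module.finrank ℝ W = k := by
      rw [hW, finrank_span_eq_card hli, Fintype.card_fin]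
    let c : OrthonormalBasis (Fin k) ℝ W :=
      (stdOrthonormalBasis ℝ W).reindex (finCongr hfinW)
    classical
    set w : Fin d → EuclideanSpace ℝ (Fin d) :=
      fun j => if h : (j : ℕ) < k then ((c ⟨j, h⟩ : W) : EuclideanSpace ℝ (Fin d)) else 0 with hw
    have horto : Orthonormal ℝ (({j : Fin d | (j : ℕ) < k}).restrict w) := by
      constructor
      · rintro ⟨j, hj⟩
        simp only [Set.restrict, Set.domRestrict_apply, hw]
        rw [dif_pos (show (j : ℕ) < k from hj)]
        exact c.orthonormal.1 _
      · rintro ⟨j1, h1⟩ ⟨j2, h2⟩ hne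
        simp only [Set.restrict, Set.domRestrict_apply, hw]
        rw [dif_pos (show (j1 : ℕ) < k from h1), dif_pos (show (j2 : ℕ) < k from h2),
          ← Submodule.coe_inner]
        refine c.orthonormal.2 fun he => hne ?_
        apply Subtype.ext
        exact Fin.ext (by simpa [Fin.ext_iff] using he)
    obtain ⟨b, hb⟩ := exists_adapted_basis w horto
    have hbc : ∀ i : Fin k, b (Fin.castLE hkd i) = ((c i : W) : EuclideanSpace ℝ (Fin d)) := by
      intro i
      have hlt : ((Fin.castLE hkd i : Fin d) : ℕ) < k := by simpa using i.2
      rw [hb (Fin.castLE hkd i) hlt]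
      simp only [hw]
      rw [dif_pos hlt]
      congr 1
    set F : EuclideanSpace ℝ (Fin d) → EuclideanSpace ℝ (Fin k) :=
      fun s => c.repr (W.orthogonalProjectionOnto s) with hF
    have hFcoord : ∀ s i, F s i = b.repr s (Fin.castLE hkd i) := by
      intro s i
      rw [hF]
      simp only
      rw [c.repr_apply_apply, Submodule.inner_orthogonalProjectionOnto_eq_of_mem_left, ← hbc i,
        ← b.repr_apply_apply]
    have hmapF := stdGaussian_map_proj hkd F b hFcoord
    have hWle : ∀ n, v n ∈ W := fun n => Submodule.subset_span ⟨n, rfl⟩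
    have hbound : ∀ s n, |⟪s, v n⟫| ≤ ‖F s‖ := by
      intro s n
      have h3 : ⟪s - ((W.orthogonalProjectionOnto s : W) : EuclideanSpace ℝ (Fin d)), v n⟫ = 0 :=
        Submodule.inner_left_of_mem_orthogonal (hWle n)
          (W.sub_starProjection_mem_orthogonal s)
      rw [inner_sub_left, sub_eq_zero] at h3
      rw [h3]
      calc |⟪((W.orthogonalProjectionOnto s : W) : EuclideanSpace ℝ (Fin d)), v n⟫|
          ≤ ‖((W.orthogonalProjectionOnto s : W) : EuclideanSpace ℝ (Fin d))‖ * ‖v n‖ :=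
            abs_real_inner_le_norm _ _
        _ = ‖(W.orthogonalProjectionOnto s : W)‖ := by rw [hunit, mul_one]; rfl
        _ = ‖F s‖ := by rw [hF]; exact (c.repr.norm_map _).symm
    have hsub2 : F ⁻¹' {z : EuclideanSpace ℝ (Fin k) | ‖z‖ < t} ⊆ S :=
      fun s hs n => lt_of_le_of_lt (hbound s n) hs
    have hFm : Measurable F := by
      have : Continuous F := c.repr.continuous.comp W.orthogonalProjectionOnto.continuous
      exact this.measurable
    have hball : MeasurableSet {z : EuclideanSpace ℝ (Fin k) | ‖z‖ < t} :=
      measurableSet_lt continuous_norm.measurable measurable_const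
    have hchain : Phi k t = (stdGaussian d (F ⁻¹' {z | ‖z‖ < t})).toReal := by
      rw [Phi, ← stdGaussian_ball hk t, ← hmapF, Measure.map_apply hFm hball]
    rw [hchain]
    exact ENNReal.toReal_mono (measure_ne_top _ _) (measure_mono hsub2)
  · -- upper bound
    have hn0 : Fin k := ⟨0, hk⟩
    have hmap := stdGaussian_map_inner hd (v ⟨0, hk⟩) (hunit _)
    have hinner : Measurable fun s : EuclideanSpace ℝ (Fin d) => ⟪s, v ⟨0, hk⟩⟫ :=
      (continuous_id.inner continuous_const).measurable
    have hA : MeasurableSet {y : ℝ | |y| < t} :=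
      measurableSet_lt (measurable_id.abs) measurable_const
    have h1 : stdGaussian d S ≤ gaussianReal 0 1 {y : ℝ | |y| ≤ t} := by
      calc stdGaussian d S
          ≤ stdGaussian d ((fun s => ⟪s, v ⟨0, hk⟩⟫) ⁻¹' {y : ℝ | |y| < t}) :=
            measure_mono fun s hs => hs ⟨0, hk⟩
        _ = gaussianReal 0 1 {y : ℝ | |y| < t} := by
            rw [← Measure.map_apply hinner hA, hmap]
        _ ≤ gaussianReal 0 1 {y : ℝ | |y| ≤ t} :=
            measure_mono fun y hy => le_of_lt (show |y| < t from hy)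
    rw [Phi_one_eq]
    exact ENNReal.toReal_mono (measure_ne_top _ _) h1
end
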